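/- Let T be a tree on n vertices and u, v adjacent vertices of T. Form the shadow graph by replacing each of u, v with an edge (u₁u₂ and v₁v₂), joining each uᵢ to all neighbors of u other than v, each vⱼ to all neighbors of v other than u, and adding all four edges uᵢvⱼ. Then the number of proper k-colorings of this shadow graph equals k·(k-1)^{n-deg(u)-deg(v)+1}·(k-2)^{deg(u)+deg(v)-1}·(k-3). -/

import Mathlib

/-- The number of proper `k`-colorings of a simple graph `G`. -/
noncomputable def numColorings {V : Type} (G : SimpleGraph V) (k : ℕ) : ℕ :=
  Nat.card {f : V → Fin k // ∀ u w, G.Adj u w → f u ≠ f w}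

/-- The shadow graph `G_S`: each `v ∈ S` is replaced by an adjacent pair `v₁, v₂`, both
joined to all neighbors of `v` not in `S`, and for every edge of `G` with both endpoints
in `S` all four edges between the corresponding pairs are added. -/
def multiShadow {V : Type} (G : SimpleGraph V) (S : Finset V) :
    SimpleGraph ({u : V // u ∉ S} ⊕ ({u : V // u ∈ S} × Bool)) :=
  SimpleGraph.fromRel (fun x y =>
    match x, y with
    | Sum.inl a, Sum.inl b => G.Adj a.1 b.1
    | Sum.inl a, Sum.inr (w, _) => G.Adj a.1 w.1
    | Sum.inr _, Sum.inl _ => False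
    | Sum.inr (w, _), Sum.inr (x, _) => w = x ∨ G.Adj w.1 x.1)

open SimpleGraph

lemma numColorings_iso {V W : Type} (G : SimpleGraph V) (H : SimpleGraph W)
    (e : G ≃g H) (k : ℕ) : numColorings G k = numColorings H k := by
  apply Nat.card_congr
  refine ⟨fun f => ⟨fun w => f.1 (e.symm w), ?_⟩, fun g => ⟨fun v => g.1 (e v), ?_⟩, ?_, ?_⟩
  · intro a b hab
    exact f.2 _ _ ((e.symm.map_adj_iff).2 hab)
  · intro a b hab
    exact g.2 _ _ ((e.map_adj_iff).2 hab)
  · intro f; ext x; simp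
  · intro g; ext x; simp

lemma numColorings_simplicial {W : Type} [Fintype W] (G : SimpleGraph W) (k d : ℕ) (w : W)
    (hd : (G.neighborSet w).ncard = d)
    (hcl : ∀ a b : W, G.Adj w a → G.Adj w b → a ≠ b → G.Adj a b) :
    numColorings G k = (k - d) * numColorings (G.induce {x | x ≠ w}) k := by
  classical
  set G' := G.induce {x | x ≠ w} with hG'
  set X := {f : W → Fin k // ∀ u w', G.Adj u w' → f u ≠ f w'} with hX
  set Y := {g : ↥{x | x ≠ w} → Fin k // ∀ u w', G'.Adj u w' → g u ≠ g w'} with hY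
  haveI : Fintype X := Fintype.ofFinite X
  haveI : Fintype Y := Fintype.ofFinite Y
  have Φprop : ∀ f : X, ∀ u w', G'.Adj u w' → f.1 u.1 ≠ f.1 w'.1 := by
    intro f u w' h
    exact f.2 _ _ h
  set Φ : X → Y := fun f => ⟨fun x => f.1 x.1, Φprop f⟩ with hΦ
  have fibEquiv : ∀ g : Y, {f : X // Φ f = g} ≃
      {c : Fin k // ∀ x : ↥{x | x ≠ w}, G.Adj w x.1 → c ≠ g.1 x} := by
    intro g
    refine ⟨fun f => ⟨f.1.1 w, ?_⟩, fun c => ⟨⟨fun x => if h : x = w then c.1 else g.1 ⟨x, h⟩, ?_⟩, ?_⟩, ?_, ?_⟩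
    · obtain ⟨⟨f, hf⟩, rfl⟩ := f
      intro x hx
      exact hf w x.1 hx
    · intro a b hab
      dsimp only
      by_cases ha : a = w
      · have hab' : G.Adj w b := by rwa [ha] at hab
        have hb : b ≠ w := fun h => G.irrefl (by rwa [h] at hab')
        rw [dif_pos ha, dif_neg hb]
        exact c.2 ⟨b, hb⟩ hab'
      · by_cases hb : b = w
        · have hab' : G.Adj a w := by rwa [hb] at hab
          rw [dif_neg ha, dif_pos hb]
          exact fun h => c.2 ⟨a, ha⟩ hab'.symm h.symm
        · rw [dif_neg ha, dif_neg hb]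
          exact g.2 ⟨a, ha⟩ ⟨b, hb⟩ hab
    · apply Subtype.ext
      apply funext
      intro x
      exact dif_neg x.2
    · rintro ⟨⟨f, hf⟩, rfl⟩
      apply Subtype.ext
      apply Subtype.ext
      apply funext
      intro x
      dsimp only
      by_cases h : x = w
      · subst h; rw [dif_pos rfl]
      · rw [dif_neg h]
    · intro c
      apply Subtype.ext
      dsimp only
      rw [dif_pos rfl]
  have fibCard : ∀ g : Y, Nat.card {f : X // Φ f = g} = k - d := by
    intro g
    rw [Nat.card_congr (fibEquiv g)]
    set A : Finset (Fin k) := (G.neighborFinset w).attach.image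
      (fun x => g.1 ⟨x.1, ((G.mem_neighborFinset w x.1).mp x.2).ne'⟩) with hA
    have hAcard : A.card = d := by
      rw [hA, Finset.card_image_of_injOn, Finset.card_attach]
      · rw [← hd]
        simp [neighborFinset_def, Set.ncard_eq_toFinset_card']
      · intro x _ y _ hxy
        by_contra hne
        have hx := (G.mem_neighborFinset w x.1).mp x.2
        have hy := (G.mem_neighborFinset w y.1).mp y.2
        have hne' : x.1 ≠ y.1 := fun h => hne (Subtype.ext h)
        have hadj : G.Adj x.1 y.1 := hcl _ _ hx hy hne'
        exact g.2 ⟨x.1, hx.ne'⟩ ⟨y.1, hy.ne'⟩ hadj hxy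
    have : {c : Fin k // ∀ x : ↥{x | x ≠ w}, G.Adj w x.1 → c ≠ g.1 x} ≃ {c : Fin k // ¬ c ∈ A} := by
      apply Equiv.subtypeEquivRight
      intro c
      constructor
      · intro h hc
        obtain ⟨x, -, hx⟩ := Finset.mem_image.mp hc
        exact h ⟨x.1, ((G.mem_neighborFinset w x.1).mp x.2).ne'⟩
          ((G.mem_neighborFinset w x.1).mp x.2) hx.symm
      · intro hc x hx heq
        apply hc
        apply Finset.mem_image.mpr
        exact ⟨⟨x.1, (G.mem_neighborFinset w x.1).mpr hx⟩, Finset.mem_attach _ _, heq.symm⟩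
    rw [Nat.card_congr this, Nat.card_eq_fintype_card, Fintype.card_subtype_compl, Fintype.card_fin]
    congr 1
    rw [← hAcard]
    exact Fintype.card_coe A
  have := Nat.card_congr (Equiv.sigmaFiberEquiv Φ).symm
  rw [numColorings, ← hX, this]
  haveI : ∀ g : Y, Fintype {f : X // Φ f = g} := fun g => Fintype.ofFinite _
  rw [Nat.card_eq_fintype_card, Fintype.card_sigma]
  have : ∀ g : Y, Fintype.card {f : X // Φ f = g} = k - d := by
    intro g; rw [← Nat.card_eq_fintype_card]; exact fibCard g
  rw [Finset.sum_congr rfl (fun g _ => this g), Finset.sum_const, Finset.card_univ, smul_eq_mul]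
  rw [numColorings, mul_comm, Nat.card_eq_fintype_card]

lemma numColorings_top_fin (m k : ℕ) :
    numColorings (⊤ : SimpleGraph (Fin m)) k = Nat.descFactorial k m := by
  induction m with
  | zero =>
    rw [numColorings]
    haveI : Unique {f : Fin 0 → Fin k // ∀ u w, (⊤ : SimpleGraph (Fin 0)).Adj u w → f u ≠ f w} :=
      { default := ⟨finZeroElim, fun u => u.elim0⟩
        uniq := fun f => Subtype.ext (funext fun x => x.elim0) }
    simp [Nat.card_unique]
  | succ m ih =>
    have hd : ((⊤ : SimpleGraph (Fin (m+1))).neighborSet (Fin.last m)).ncard = m := by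
      have h1 : (⊤ : SimpleGraph (Fin (m+1))).neighborSet (Fin.last m) = {Fin.last m}ᶜ := by
        ext x
        simp [SimpleGraph.neighborSet, ne_comm]
      rw [h1, Set.ncard_eq_toFinset_card']
      simp [Finset.card_compl]
    rw [numColorings_simplicial (⊤ : SimpleGraph (Fin (m+1))) k m (Fin.last m) hd
      (fun a b _ _ hne => by simpa using hne)]
    have hcard : Fintype.card ↥{x : Fin (m+1) | x ≠ Fin.last m} = m := by
      rw [Fintype.card_congr (Equiv.subtypeEquivRight (p := fun x => x ∈ {x : Fin (m+1) | x ≠ Fin.last m}) (q := fun x => ¬ (x = Fin.last m)) (by simp))]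
      rw [Fintype.card_subtype_compl, Fintype.card_subtype_eq]
      simp
    have e0 : ↥{x : Fin (m+1) | x ≠ Fin.last m} ≃ Fin m := Fintype.equivFinOfCardEq hcard
    have iso : (⊤ : SimpleGraph (Fin (m+1))).induce {x | x ≠ Fin.last m} ≃g (⊤ : SimpleGraph (Fin m)) := by
      refine ⟨e0, ?_⟩
      intro a b
      simp only [SimpleGraph.top_adj, SimpleGraph.comap_adj, EmbeddingLike.apply_eq_iff_eq, ne_eq,
        Function.Embedding.coe_subtype]
      rw [← Subtype.ext_iff]
    rw [numColorings_iso _ _ iso, ih, Nat.descFactorial_succ]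

lemma numColorings_top (X : Type) [Fintype X] (k : ℕ) :
    numColorings (⊤ : SimpleGraph X) k = Nat.descFactorial k (Fintype.card X) := by
  have iso : (⊤ : SimpleGraph X) ≃g (⊤ : SimpleGraph (Fin (Fintype.card X))) := by
    refine ⟨Fintype.equivFin X, ?_⟩
    intro a b
    simp
  rw [numColorings_iso _ _ iso, numColorings_top_fin]

lemma tree_no_triangle {V : Type} {T : SimpleGraph V} (hT : T.IsTree) {u v x : V}
    (huv : T.Adj u v) (hux : T.Adj u x) (hvx : T.Adj v x) : False := by
  have hp1 : (Walk.cons hvx.symm Walk.nil : T.Walk x v).IsPath := by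
    simp [Walk.isPath_def]
    exact hvx.ne'
  have hp2 : (Walk.cons hux.symm (Walk.cons huv Walk.nil) : T.Walk x v).IsPath := by
    simp [Walk.isPath_def]
    exact ⟨⟨hux.ne', hvx.ne'⟩, huv.ne⟩
  have heq := (hT.existsUnique_path x v).unique hp1 hp2
  have : (Walk.cons hvx.symm Walk.nil : T.Walk x v).length
      = (Walk.cons hux.symm (Walk.cons huv Walk.nil) : T.Walk x v).length := by rw [heq]
  simp at this

lemma exists_leaf {V : Type} [Fintype V] [DecidableEq V] (T : SimpleGraph V)
    (hT : T.IsTree) (h3 : 3 ≤ Fintype.card V) (u v : V) (huv : T.Adj u v) :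
    ∃ (ℓ q : V), ℓ ≠ u ∧ ℓ ≠ v ∧ T.neighborSet ℓ = {q} := by
  classical
  haveI : DecidableRel T.Adj := Classical.decRel _
  have hcard2 : 1 < Fintype.card V := by omega
  have hex : ∀ x : V, ∃ y, T.Adj x y := by
    intro x
    obtain ⟨y, hy⟩ := Fintype.exists_ne_of_one_lt_card hcard2 x
    obtain ⟨w⟩ := hT.isConnected.preconnected x y
    cases w with
    | nil => exact absurd rfl hy
    | cons h _ => exact ⟨_, h⟩
  have hdegpos : ∀ x : V, 1 ≤ T.degree x := by
    intro x
    rw [Nat.one_le_iff_ne_zero, ← Nat.pos_iff_ne_zero, T.degree_pos_iff_exists_adj]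
    exact hex x
  by_contra hcon
  push_neg at hcon
  have hdeg2 : ∀ x : V, x ≠ u → x ≠ v → 2 ≤ T.degree x := by
    intro x hxu hxv
    by_contra hlt
    have := hdegpos x
    have h1 : T.degree x = 1 := by omega
    obtain ⟨q, hq⟩ := Finset.card_eq_one.mp h1
    refine hcon x q hxu hxv ?_
    have : (T.neighborSet x) = (↑(T.neighborFinset x) : Set V) := by
      simp [neighborFinset_def]
    rw [this, hq, Finset.coe_singleton]
  -- degree sum
  have hsum : ∑ x : V, T.degree x = 2 * (Fintype.card V - 1) := by
    rw [T.sum_degrees_eq_twice_card_edges, ← hT.card_edgeFinset]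
    omega
  set s : Finset V := {u, v} with hs
  have hsplit : ∑ x ∈ Finset.univ \ s, T.degree x + ∑ x ∈ s, T.degree x = ∑ x : V, T.degree x :=
    Finset.sum_sdiff (Finset.subset_univ s)
  have hcards : s.card = 2 := Finset.card_pair huv.ne
  have hrest : 2 * (Fintype.card V - 2) ≤ ∑ x ∈ Finset.univ \ s, T.degree x := by
    have : (Finset.univ \ s).card = Fintype.card V - 2 := by
      rw [Finset.card_sdiff_of_subset (Finset.subset_univ s), hcards, Finset.card_univ]
    calc 2 * (Fintype.card V - 2) = (Finset.univ \ s).card • 2 := by rw [this, smul_eq_mul]; ring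
    _ ≤ ∑ x ∈ Finset.univ \ s, T.degree x := by
        apply Finset.card_nsmul_le_sum
        intro x hx
        simp only [hs, Finset.mem_sdiff, Finset.mem_univ, Finset.mem_insert,
          Finset.mem_singleton, true_and] at hx
        push_neg at hx
        exact hdeg2 x hx.1 hx.2
  have hsums : ∑ x ∈ s, T.degree x = T.degree u + T.degree v := Finset.sum_pair huv.ne
  have hdu : T.degree u = 1 ∧ T.degree v = 1 := by
    have h1 := hdegpos u
    have h2 := hdegpos v
    constructor <;> omega
  -- now N(u) = {v}, N(v) = {u}
  have hNu : T.neighborFinset u = {v} := by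
    have := hdu.1
    obtain ⟨q, hq⟩ := Finset.card_eq_one.mp this
    have hvmem : v ∈ T.neighborFinset u := by simpa using huv
    rw [hq] at hvmem ⊢
    simp at hvmem
    rw [hvmem]
  have hNv : T.neighborFinset v = {u} := by
    obtain ⟨q, hq⟩ := Finset.card_eq_one.mp hdu.2
    have hvmem : u ∈ T.neighborFinset v := by simpa using huv.symm
    rw [hq] at hvmem ⊢
    simp at hvmem
    rw [hvmem]
  have step : ∀ x z : V, T.Adj x z → (x = u ∨ x = v) → (z = u ∨ z = v) := by
    rintro x z hadj (rfl | rfl)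
    · right
      have : z ∈ T.neighborFinset x := by simpa using hadj
      rw [hNu] at this
      simpa using this
    · left
      have : z ∈ T.neighborFinset x := by simpa using hadj
      rw [hNv] at this
      simpa using this
  have hwalk : ∀ {x y : V} (_ : T.Walk x y), (x = u ∨ x = v) → (y = u ∨ y = v) := by
    intro x y w
    induction w with
    | nil => exact id
    | cons h p ih => exact fun hx => ih (step _ _ h hx)
  have : (Finset.univ \ s).Nonempty := by
    rw [← Finset.card_pos, Finset.card_sdiff_of_subset (Finset.subset_univ s), hcards, Finset.card_univ]
    omega
  obtain ⟨x0, hx0⟩ := this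
  simp only [hs, Finset.mem_sdiff, Finset.mem_univ, Finset.mem_insert, Finset.mem_singleton,
    true_and] at hx0
  push_neg at hx0
  obtain ⟨w⟩ := hT.isConnected.preconnected u x0
  rcases hwalk w (Or.inl rfl) with h | h
  · exact hx0.1 h
  · exact hx0.2 h

lemma adj_of_mem_singleton_nbhd {V : Type} {T : SimpleGraph V} {ℓ q x : V}
    (hN : T.neighborSet ℓ = {q}) (h : T.Adj ℓ x) : x = q := by
  have : x ∈ T.neighborSet ℓ := h
  rw [hN] at this
  simpa using this

lemma isTree_delete_leaf {V : Type} {T : SimpleGraph V} (hT : T.IsTree) {ℓ q : V}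
    (hN : T.neighborSet ℓ = {q}) : (T.induce {x | x ≠ ℓ}).IsTree := by
  have hq : T.Adj ℓ q := by
    have : q ∈ T.neighborSet ℓ := by rw [hN]; rfl
    exact this
  constructor
  · -- connected
    haveI : Nonempty ↥{x : V | x ≠ ℓ} := ⟨⟨q, hq.ne'⟩⟩
    apply SimpleGraph.Connected.mk
    have key : ∀ (m : ℕ) (x y : V) (wxy : T.Walk x y), wxy.length ≤ m →
        ∀ (hx : x ≠ ℓ) (hy : y ≠ ℓ),
        (T.induce {x | x ≠ ℓ}).Reachable ⟨x, hx⟩ ⟨y, hy⟩ := by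
      intro m
      induction m with
      | zero =>
        intro x y wxy hlen hx hy
        cases wxy with
        | nil => exact Reachable.refl _
        | cons h p => simp at hlen
      | succ m ih =>
        intro x y wxy hlen hx hy
        cases wxy with
        | nil => exact Reachable.refl _
        | @cons _ z _ h q' =>
          by_cases hz : z = ℓ
          · subst hz
            have hxq : x = q := adj_of_mem_singleton_nbhd hN h.symm
            cases q' with
            | nil => exact absurd rfl hy
            | @cons _ z2 _ h2 r =>
              have hz2 : z2 = q := adj_of_mem_singleton_nbhd hN h2
              have hlen' : r.length ≤ m := by
                simp [Walk.length_cons] at hlen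
                omega
              exact ih x y (r.copy (hz2.trans hxq.symm) rfl)
                (by rw [Walk.length_copy]; exact hlen') hx hy
          · have hstep : (T.induce {x | x ≠ ℓ}).Adj ⟨x, hx⟩ ⟨z, hz⟩ := by
              simpa using h
            have hlen' : q'.length ≤ m := by
              simp [Walk.length_cons] at hlen
              omega
            exact hstep.reachable.trans (ih z y q' hlen' hz hy)
    intro a b
    obtain ⟨w⟩ := hT.isConnected.preconnected a.1 b.1
    exact key w.length a.1 b.1 w le_rfl a.2 b.2
  · -- acyclic
    intro a c hc
    have := hc.map (f := (SimpleGraph.Embedding.induce {x : V | x ≠ ℓ} (G := T)).toHom)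
      (SimpleGraph.Embedding.induce {x : V | x ≠ ℓ} (G := T)).injective
    exact hT.IsAcyclic _ this

open SimpleGraph

lemma multiShadow_adj_inl_inl {V : Type} (G : SimpleGraph V) (S : Finset V)
    (a b : {u : V // u ∉ S}) :
    (multiShadow G S).Adj (Sum.inl a) (Sum.inl b) ↔ G.Adj a.1 b.1 := by
  simp only [multiShadow, fromRel_adj, ne_eq, Sum.inl.injEq]
  constructor
  · rintro ⟨-, h | h⟩
    · exact h
    · exact h.symm
  · intro h
    exact ⟨fun he => G.irrefl (by rw [he] at h; exact h), Or.inl h⟩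

lemma multiShadow_adj_inl_inr {V : Type} (G : SimpleGraph V) (S : Finset V)
    (a : {u : V // u ∉ S}) (w : {u : V // u ∈ S}) (i : Bool) :
    (multiShadow G S).Adj (Sum.inl a) (Sum.inr (w, i)) ↔ G.Adj a.1 w.1 := by
  simp only [multiShadow, fromRel_adj, ne_eq]
  constructor
  · rintro ⟨-, h | h⟩
    · exact h
    · exact h.elim
  · intro h
    exact ⟨by simp, Or.inl h⟩

lemma multiShadow_adj_inr_inl {V : Type} (G : SimpleGraph V) (S : Finset V)
    (a : {u : V // u ∉ S}) (w : {u : V // u ∈ S}) (i : Bool) :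
    (multiShadow G S).Adj (Sum.inr (w, i)) (Sum.inl a) ↔ G.Adj a.1 w.1 := by
  rw [SimpleGraph.adj_comm]
  exact multiShadow_adj_inl_inr G S a w i

lemma multiShadow_adj_inr_inr {V : Type} (G : SimpleGraph V) (S : Finset V)
    (w x : {u : V // u ∈ S}) (i j : Bool) :
    (multiShadow G S).Adj (Sum.inr (w, i)) (Sum.inr (x, j)) ↔
      ((w, i) ≠ (x, j) ∧ (w = x ∨ G.Adj w.1 x.1)) := by
  simp only [multiShadow, fromRel_adj, ne_eq, Sum.inr.injEq]
  constructor
  · rintro ⟨hne, h | h⟩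
    · exact ⟨hne, h⟩
    · rcases h with h | h
      · exact ⟨hne, Or.inl h.symm⟩
      · exact ⟨hne, Or.inr h.symm⟩
  · rintro ⟨hne, h⟩
    exact ⟨hne, Or.inl h⟩

noncomputable def shadow_delete_iso {V : Type} [DecidableEq V] (T : SimpleGraph V) (u v ℓ : V)
    (hℓS : ℓ ∉ ({u, v} : Finset V)) (hu : u ≠ ℓ) (hv : v ≠ ℓ) :
    ((multiShadow T {u, v}).induce {z | z ≠ Sum.inl ⟨ℓ, hℓS⟩}) ≃g
      multiShadow (T.induce {x : V | x ≠ ℓ})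
        ({⟨u, hu⟩, ⟨v, hv⟩} : Finset ↥{x : V | x ≠ ℓ}) := by
  set S : Finset V := {u, v} with hS
  set S' : Finset ↥{x : V | x ≠ ℓ} := {⟨u, hu⟩, ⟨v, hv⟩} with hS'
  have hmem : ∀ a : ↥{x : V | x ≠ ℓ}, a ∈ S' ↔ a.1 ∈ S := by
    rintro ⟨a, ha⟩
    simp [hS, hS', Subtype.ext_iff]
  refine ⟨⟨?_, ?_, ?_, ?_⟩, ?_⟩
  · -- toFun
    rintro ⟨(a | ⟨w, i⟩), hz⟩
    · exact Sum.inl ⟨⟨a.1, fun h => hz (congrArg Sum.inl (Subtype.ext h))⟩,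
        fun h => a.2 ((hmem _).mp h)⟩
    · exact Sum.inr (⟨⟨w.1, fun h => hℓS (h ▸ w.2)⟩, (hmem _).mpr w.2⟩, i)
  · -- invFun
    rintro (b | ⟨w, i⟩)
    · exact ⟨Sum.inl ⟨b.1.1, fun h => b.2 ((hmem _).mpr h)⟩,
        fun h => b.1.2 (congrArg (fun z => match z with
          | Sum.inl t => t.1
          | Sum.inr _ => ℓ) h)⟩
    · exact ⟨Sum.inr (⟨w.1.1, (hmem _).mp w.2⟩, i), fun h => by cases h⟩
  · rintro ⟨(a | ⟨w, i⟩), hz⟩ <;> rfl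
  · rintro (b | ⟨w, i⟩) <;> rfl
  · rintro ⟨(a | ⟨w, i⟩), hz⟩ ⟨(b | ⟨x, j⟩), hz'⟩ <;>
      simp only [Equiv.coe_fn_mk, comap_adj, Function.Embedding.coe_subtype,
        multiShadow_adj_inl_inl, multiShadow_adj_inl_inr, multiShadow_adj_inr_inl,
        multiShadow_adj_inr_inr, Prod.ext_iff, Subtype.ext_iff, ne_eq] <;>
      simp [Subtype.ext_iff]


lemma shadow_count (n : ℕ) : ∀ (V : Type) (iV : Fintype V) (iD : DecidableEq V)
    (T : SimpleGraph V), T.IsTree → Fintype.card V = n →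
    ∀ u v : V, T.Adj u v → ∀ k : ℕ,
    numColorings (multiShadow T {u, v}) k =
      k * (k - 1) ^ (n + 1 - ((T.neighborSet u).ncard + (T.neighborSet v).ncard)) *
        (k - 2) ^ ((T.neighborSet u).ncard + (T.neighborSet v).ncard - 1) * (k - 3) := by
  induction n using Nat.strong_induction_on with
  | _ n ih =>
  intro V iV iD T hT hn u v huv k
  have hne : u ≠ v := huv.ne
  have hn2 : 2 ≤ n := by
    rw [← hn]
    have h1 : ({u, v} : Finset V).card ≤ Fintype.card V := by
      rw [← Finset.card_univ]
      exact Finset.card_le_card (Finset.subset_univ _)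
    rwa [Finset.card_pair hne] at h1
  have hdu1 : 1 ≤ (T.neighborSet u).ncard :=
    (Set.ncard_pos (Set.toFinite _)).mpr ⟨v, huv⟩
  have hdv1 : 1 ≤ (T.neighborSet v).ncard :=
    (Set.ncard_pos (Set.toFinite _)).mpr ⟨u, huv.symm⟩
  have hdisj : Disjoint (T.neighborSet u) (T.neighborSet v) := by
    rw [Set.disjoint_left]
    intro x hxu hxv
    exact tree_no_triangle hT huv hxu hxv
  have hsn : (T.neighborSet u).ncard + (T.neighborSet v).ncard ≤ n := by
    have h1 := Set.ncard_union_eq hdisj (Set.toFinite _) (Set.toFinite _)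
    have h2 : (T.neighborSet u ∪ T.neighborSet v).ncard ≤ Fintype.card V := by
      have h3 := Set.ncard_le_ncard (Set.subset_univ (T.neighborSet u ∪ T.neighborSet v))
        (Set.toFinite _)
      rwa [Set.ncard_univ, Nat.card_eq_fintype_card] at h3
    omega
  by_cases hbase : n = 2
  · -- BASE CASE
    subst hbase
    have hall : ∀ x : V, x = u ∨ x = v := by
      have huniv : ({u, v} : Finset V) = Finset.univ :=
        Finset.eq_univ_of_card _ (by rw [Finset.card_pair hne, hn])

      intro x
      have hx : x ∈ ({u, v} : Finset V) := by rw [huniv]; exact Finset.mem_univ x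
      simpa using hx
    have hNu : T.neighborSet u = {v} := by
      ext x
      simp only [mem_neighborSet, Set.mem_singleton_iff]
      constructor
      · intro h
        rcases hall x with rfl | rfl
        · exact absurd h (T.irrefl)
        · rfl
      · rintro rfl; exact huv
    have hNv : T.neighborSet v = {u} := by
      ext x
      simp only [mem_neighborSet, Set.mem_singleton_iff]
      constructor
      · intro h
        rcases hall x with rfl | rfl
        · rfl
        · exact absurd h (T.irrefl)
      · rintro rfl; exact huv.symm
    haveI : IsEmpty {x : V // x ∉ ({u, v} : Finset V)} := by
      refine ⟨fun x => x.2 ?_⟩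
      rcases hall x.1 with h | h <;> simp [h]
    have helper : ∀ w x : {x : V // x ∈ ({u, v} : Finset V)}, w = x ∨ T.Adj w.1 x.1 := by
      intro w x
      by_cases h : w = x
      · exact Or.inl h
      · right
        have hwx : w.1 ≠ x.1 := fun hh => h (Subtype.ext hh)
        have hw := w.2
        have hx := x.2
        simp only [Finset.mem_insert, Finset.mem_singleton] at hw hx
        rcases hw with hw | hw <;> rcases hx with hx | hx <;>
          rw [hw, hx] <;> first
          | exact absurd (hw ▸ hx ▸ hwx) (by simp [hw, hx]; intro hh; exact (hwx (by rw [hw, hx])).elim)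
          | exact huv
          | exact huv.symm
          | exact absurd rfl (by rw [hw, hx] at hwx; exact hwx)
    have iso : multiShadow T {u, v} ≃g
        (⊤ : SimpleGraph ({x : V // x ∈ ({u, v} : Finset V)} × Bool)) := by
      refine ⟨Equiv.emptySum _ _, ?_⟩
      rintro (a | ⟨w, i⟩) (b | ⟨x, j⟩)
      · exact isEmptyElim a
      · exact isEmptyElim a
      · exact isEmptyElim b
      · simp only [Equiv.emptySum_apply_inr, top_adj, multiShadow_adj_inr_inr, ne_eq]
        constructor
        · intro h
          exact ⟨h, helper w x⟩
        · rintro ⟨h, -⟩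
          exact h
    rw [numColorings_iso _ _ iso, numColorings_top]
    have hc4 : Fintype.card ({x : V // x ∈ ({u, v} : Finset V)} × Bool) = 4 := by
      rw [Fintype.card_prod, Fintype.card_coe, Finset.card_pair hne, Fintype.card_bool]
    rw [hc4, hNu, hNv, Set.ncard_singleton]
    simp [Nat.descFactorial]
    ring
  · -- INDUCTIVE STEP
    have h3 : 3 ≤ Fintype.card V := by omega
    obtain ⟨ℓ, q, hℓu, hℓv, hN⟩ := exists_leaf T hT h3 u v huv
    have hℓq : T.Adj ℓ q := by
      have : q ∈ T.neighborSet ℓ := by rw [hN]; rfl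
      exact this
    have hℓS : ℓ ∉ ({u, v} : Finset V) := by simp [hℓu, hℓv]
    have hadjℓ : ∀ x : V, T.Adj ℓ x ↔ x = q := by
      intro x
      constructor
      · exact adj_of_mem_singleton_nbhd hN
      · rintro rfl; exact hℓq
    have hT' := isTree_delete_leaf hT hN
    have hcard' : Fintype.card ↥{x : V | x ≠ ℓ} = n - 1 := by
      rw [Fintype.card_congr (Equiv.subtypeEquivRight (q := fun x => ¬ (x = ℓ)) (by simp))]
      rw [Fintype.card_subtype_compl, Fintype.card_subtype_eq, hn]
    have huv' : (T.induce {x : V | x ≠ ℓ}).Adj ⟨u, Ne.symm hℓu⟩ ⟨v, Ne.symm hℓv⟩ := by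
      simpa using huv
    have hncard' : ∀ (x : V) (hx : x ≠ ℓ),
        ((T.induce {x : V | x ≠ ℓ}).neighborSet ⟨x, hx⟩).ncard
          = (T.neighborSet x \ {ℓ}).ncard := by
      intro x hx
      rw [← Set.ncard_image_of_injective _ Subtype.val_injective]
      congr 1
      ext y
      simp only [Set.mem_image, mem_neighborSet, comap_adj, Function.Embedding.coe_subtype,
        Set.mem_diff, Set.mem_singleton_iff]
      constructor
      · rintro ⟨⟨y', hy'⟩, hadj, rfl⟩
        exact ⟨hadj, hy'⟩
      · rintro ⟨hadj, hy⟩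
        exact ⟨⟨y, hy⟩, hadj, rfl⟩
    have hIH := ih (n - 1) (by omega) ↥{x : V | x ≠ ℓ} inferInstance inferInstance
      (T.induce {x : V | x ≠ ℓ}) hT' hcard' ⟨u, Ne.symm hℓu⟩ ⟨v, Ne.symm hℓv⟩ huv' k
    have hisoeq := numColorings_iso _ _ (shadow_delete_iso T u v ℓ hℓS (Ne.symm hℓu) (Ne.symm hℓv)) k
    by_cases hqS : q ∈ ({u, v} : Finset V)
    · -- leaf attached to u or v
      have hNΓ : (multiShadow T {u, v}).neighborSet (Sum.inl ⟨ℓ, hℓS⟩)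
          = {Sum.inr (⟨q, hqS⟩, true), Sum.inr (⟨q, hqS⟩, false)} := by
        ext z
        rcases z with b | ⟨w, i⟩
        · simp only [mem_neighborSet, multiShadow_adj_inl_inl, hadjℓ, Set.mem_insert_iff,
            Set.mem_singleton_iff]
          constructor
          · intro h
            exact ((h ▸ b.2) hqS).elim
          · rintro (h | h) <;> exact absurd h (by simp)
        · simp only [mem_neighborSet, multiShadow_adj_inl_inr, hadjℓ, Set.mem_insert_iff,
            Set.mem_singleton_iff, Sum.inr.injEq, Prod.ext_iff, Subtype.ext_iff]
          constructor
          · intro h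
            cases i <;> simp [h]
          · rintro (⟨h, -⟩ | ⟨h, -⟩) <;> exact h
      have hd2 : ((multiShadow T {u, v}).neighborSet (Sum.inl ⟨ℓ, hℓS⟩)).ncard = 2 := by
        rw [hNΓ, Set.ncard_pair (by simp)]
      have hcl2 : ∀ a b, (multiShadow T {u, v}).Adj (Sum.inl ⟨ℓ, hℓS⟩) a →
          (multiShadow T {u, v}).Adj (Sum.inl ⟨ℓ, hℓS⟩) b → a ≠ b →
          (multiShadow T {u, v}).Adj a b := by
        intro a b ha hb hab
        have ha' : a ∈ (multiShadow T {u, v}).neighborSet (Sum.inl ⟨ℓ, hℓS⟩) := ha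
        have hb' : b ∈ (multiShadow T {u, v}).neighborSet (Sum.inl ⟨ℓ, hℓS⟩) := hb
        rw [hNΓ] at ha' hb'
        rcases ha' with rfl | rfl <;> rcases hb' with rfl | rfl
        · exact absurd rfl hab
        · rw [multiShadow_adj_inr_inr]
          exact ⟨by simp, Or.inl rfl⟩
        · rw [multiShadow_adj_inr_inr]
          exact ⟨by simp, Or.inl rfl⟩
        · exact absurd rfl hab
      rw [numColorings_simplicial _ k 2 _ hd2 hcl2, hisoeq, hIH]
      have hqmem : q = u ∨ q = v := by simpa using hqS
      rcases hqmem with rfl | rfl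
      · -- q = u
        have hℓNu : ℓ ∈ T.neighborSet q := hℓq.symm
        have hdu2 : 2 ≤ (T.neighborSet q).ncard := by
          have hsub : ({v, ℓ} : Set V) ⊆ T.neighborSet q := by
            rintro x (rfl | rfl)
            · exact huv
            · exact hℓq.symm
          have h4 := Set.ncard_le_ncard hsub (Set.toFinite _)
          rwa [Set.ncard_pair (Ne.symm hℓv)] at h4
        have hdu' : ((T.induce {x : V | x ≠ ℓ}).neighborSet ⟨q, Ne.symm hℓu⟩).ncard
            = (T.neighborSet q).ncard - 1 := by
          rw [hncard' q (Ne.symm hℓu), Set.ncard_diff_singleton_of_mem hℓNu]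
        have hNvℓ : ℓ ∉ T.neighborSet v := by
          intro h
          exact hne ((hadjℓ v).mp h.symm).symm
        have hdv' : ((T.induce {x : V | x ≠ ℓ}).neighborSet ⟨v, Ne.symm hℓv⟩).ncard
            = (T.neighborSet v).ncard := by
          rw [hncard' v (Ne.symm hℓv), Set.diff_singleton_eq_self hNvℓ]
        rw [hdu', hdv']
        have e1 : n - 1 + 1 - ((T.neighborSet q).ncard - 1 + (T.neighborSet v).ncard)
            = n + 1 - ((T.neighborSet q).ncard + (T.neighborSet v).ncard) := by omega
        have e2 : (T.neighborSet q).ncard + (T.neighborSet v).ncard - 1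
            = ((T.neighborSet q).ncard - 1 + (T.neighborSet v).ncard - 1) + 1 := by omega
        rw [e1, e2, pow_succ]
        ring
      · -- q = v
        have hℓNv : ℓ ∈ T.neighborSet q := hℓq.symm
        have hdv2 : 2 ≤ (T.neighborSet q).ncard := by
          have hsub : ({u, ℓ} : Set V) ⊆ T.neighborSet q := by
            rintro x (rfl | rfl)
            · exact huv.symm
            · exact hℓq.symm
          have h4 := Set.ncard_le_ncard hsub (Set.toFinite _)
          rwa [Set.ncard_pair (Ne.symm hℓu)] at h4
        have hdv' : ((T.induce {x : V | x ≠ ℓ}).neighborSet ⟨q, Ne.symm hℓv⟩).ncard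
            = (T.neighborSet q).ncard - 1 := by
          rw [hncard' q (Ne.symm hℓv), Set.ncard_diff_singleton_of_mem hℓNv]
        have hNuℓ : ℓ ∉ T.neighborSet u := by
          intro h
          exact hne ((hadjℓ u).mp h.symm)
        have hdu' : ((T.induce {x : V | x ≠ ℓ}).neighborSet ⟨u, Ne.symm hℓu⟩).ncard
            = (T.neighborSet u).ncard := by
          rw [hncard' u (Ne.symm hℓu), Set.diff_singleton_eq_self hNuℓ]
        rw [hdu', hdv']
        have e1 : n - 1 + 1 - ((T.neighborSet u).ncard + ((T.neighborSet q).ncard - 1))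
            = n + 1 - ((T.neighborSet u).ncard + (T.neighborSet q).ncard) := by omega
        have e2 : (T.neighborSet u).ncard + (T.neighborSet q).ncard - 1
            = ((T.neighborSet u).ncard + ((T.neighborSet q).ncard - 1) - 1) + 1 := by omega
        rw [e1, e2, pow_succ]
        ring
    · -- leaf attached elsewhere
      have hNuℓ : ℓ ∉ T.neighborSet u := by
        intro h
        exact hqS (((hadjℓ u).mp (SimpleGraph.Adj.symm h)) ▸ (by simp : u ∈ ({u, v} : Finset V)))
      have hNvℓ : ℓ ∉ T.neighborSet v := by
        intro h
        exact hqS (((hadjℓ v).mp (SimpleGraph.Adj.symm h)) ▸ (by simp : v ∈ ({u, v} : Finset V)))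
      have hdu' : ((T.induce {x : V | x ≠ ℓ}).neighborSet ⟨u, Ne.symm hℓu⟩).ncard
          = (T.neighborSet u).ncard := by
        rw [hncard' u (Ne.symm hℓu), Set.diff_singleton_eq_self hNuℓ]
      have hdv' : ((T.induce {x : V | x ≠ ℓ}).neighborSet ⟨v, Ne.symm hℓv⟩).ncard
          = (T.neighborSet v).ncard := by
        rw [hncard' v (Ne.symm hℓv), Set.diff_singleton_eq_self hNvℓ]
      -- neighborhood of the leaf in the shadow graph
      have hNΓ : (multiShadow T {u, v}).neighborSet (Sum.inl ⟨ℓ, hℓS⟩)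
          = {Sum.inl ⟨q, hqS⟩} := by
        ext z
        rcases z with b | ⟨w, i⟩
        · simp [mem_neighborSet, multiShadow_adj_inl_inl, hadjℓ, Subtype.ext_iff]
        · simp only [mem_neighborSet, multiShadow_adj_inl_inr, hadjℓ, Set.mem_singleton_iff]
          constructor
          · intro h
            exact absurd (h ▸ w.2) hqS
          · intro h
            exact absurd h (by simp)
      have hd1 : ((multiShadow T {u, v}).neighborSet (Sum.inl ⟨ℓ, hℓS⟩)).ncard = 1 := by
        rw [hNΓ, Set.ncard_singleton]
      have hcl1 : ∀ a b, (multiShadow T {u, v}).Adj (Sum.inl ⟨ℓ, hℓS⟩) a →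
          (multiShadow T {u, v}).Adj (Sum.inl ⟨ℓ, hℓS⟩) b → a ≠ b →
          (multiShadow T {u, v}).Adj a b := by
        intro a b ha hb hab
        have ha' : a ∈ (multiShadow T {u, v}).neighborSet (Sum.inl ⟨ℓ, hℓS⟩) := ha
        have hb' : b ∈ (multiShadow T {u, v}).neighborSet (Sum.inl ⟨ℓ, hℓS⟩) := hb
        rw [hNΓ] at ha' hb'
        exact absurd (ha'.trans hb'.symm) hab
      rw [numColorings_simplicial _ k 1 _ hd1 hcl1, hisoeq, hIH,
        hdu', hdv']
      have e1 : n + 1 - ((T.neighborSet u).ncard + (T.neighborSet v).ncard)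
          = (n - 1 + 1 - ((T.neighborSet u).ncard + (T.neighborSet v).ncard)) + 1 := by
        omega
      rw [e1, pow_succ]
      ring

/-- For a tree `T` on `n` vertices and adjacent vertices `u, v`, the shadow graph on
`{u, v}` (each of `u, v` replaced by an adjacent pair joined to its other neighbors,
with all four cross edges) has exactly
`k·(k-1)^{n-deg(u)-deg(v)+1}·(k-2)^{deg(u)+deg(v)-1}·(k-3)` proper `k`-colorings. -/
theorem tree_shadow_adjacent_pair {V : Type} [Fintype V] [DecidableEq V]
    (T : SimpleGraph V) (hT : T.IsTree) (n : ℕ) (hn : Fintype.card V = n)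
    (u v : V) (huv : T.Adj u v) (k : ℕ) :
    numColorings (multiShadow T {u, v}) k =
      k * (k - 1) ^ (n + 1 - ((T.neighborSet u).ncard + (T.neighborSet v).ncard)) *
        (k - 2) ^ ((T.neighborSet u).ncard + (T.neighborSet v).ncard - 1) * (k - 3) := by
  exact shadow_count n V _ _ T hT hn u v huv k
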